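/- Fix d,r∈ℕ and p∈[1,∞]. Let Φ=(φ^1,…,φ^r) be measurable functions on ℝ^d with ‖φ^i‖_{W^1}<∞ for each i, and let C=(c^1,…,c^r)∈(ℓ^p(ℤ^d))^{(r)}. Then the series f(x) = ∑_{k∈ℤ^d}∑_{i=1}^r c^i(k)φ^i(x−k) converges absolutely for almost every x∈ℝ^d and the resulting function satisfies ‖f‖_{W^p} ≤ ‖C‖_{(ℓ^p(ℤ^d))^{(r)}} · ‖Φ‖_{(W^1)^{(r)}}. -/

import Mathlib

open MeasureTheory ENNReal

noncomputable section

abbrev Euc (d : ℕ) := EuclideanSpace ℝ (Fin d)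

/-- Embedding of `ℤ^d` into `ℝ^d`. -/
def zemb {d : ℕ} (k : Fin d → ℤ) : Euc d := WithLp.toLp 2 (fun i => (k i : ℝ))

/-- `ess sup_{x ∈ [0,1]^d} |f(x+k)|`, valued in `ℝ≥0∞`. -/
def cubeSup {d : ℕ} (f : Euc d → ℂ) (k : Fin d → ℤ) : ℝ≥0∞ :=
  essSup (fun x => (‖f (x + zemb k)‖₊ : ℝ≥0∞))
    (volume.restrict {x : Euc d | ∀ i, x i ∈ Set.Icc (0:ℝ) 1})

/-- The Wiener amalgam norm `‖f‖_{W^p}`. -/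
def WNorm {d : ℕ} (p : ℝ≥0∞) (f : Euc d → ℂ) : ℝ≥0∞ :=
  if p = ∞ then ⨆ k : Fin d → ℤ, cubeSup f k
  else (∑' k : Fin d → ℤ, cubeSup f k ^ p.toReal) ^ (1 / p.toReal)

/-- Membership in `W₀^1`: continuous with finite `W^1` norm. -/
def MemW01 {d : ℕ} (f : Euc d → ℂ) : Prop := Continuous f ∧ WNorm 1 f < ∞

/-- `(W^1)^{(r)}` norm of a vector of functions. -/
def WNormVec {d r : ℕ} (Φ : Fin r → Euc d → ℂ) : ℝ≥0∞ := ∑ i, WNorm 1 (Φ i)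

/-- the `ℓ^p` norm of a family of complex numbers, valued in `ℝ≥0∞`. -/
def lpNorm {ι : Type*} (p : ℝ≥0∞) (c : ι → ℂ) : ℝ≥0∞ :=
  if p = ∞ then ⨆ j, (‖c j‖₊ : ℝ≥0∞)
  else (∑' j, (‖c j‖₊ : ℝ≥0∞) ^ p.toReal) ^ (1 / p.toReal)

/-- The `(ℓ^p(ℤ^d))^{(r)}` norm `‖C‖ = ∑_i ‖c^i‖_{ℓ^p}`. -/
def vlpNorm {d r : ℕ} (p : ℝ≥0∞) (C : Fin r → (Fin d → ℤ) → ℂ) : ℝ≥0∞ :=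
  ∑ i, lpNorm p (C i)

/-- `f_C = ∑_{k ∈ ℤ^d} ∑_i c^i(k) φ^i(· - k)`. -/
def genFun {d r : ℕ} (Φ : Fin r → Euc d → ℂ) (C : Fin r → (Fin d → ℤ) → ℂ)
    (x : Euc d) : ℂ :=
  ∑' k : Fin d → ℤ, ∑ i, C i k * Φ i (x - zemb k)

/-- Integral of a complex-valued function against a finite complex Borel measure,
via the Jordan decompositions of the real and imaginary parts. -/
def cInt {d : ℕ} (μ : ComplexMeasure (Euc d)) (f : Euc d → ℂ) : ℂ :=
  ((∫ x, f x ∂(ComplexMeasure.re μ).toJordanDecomposition.posPart) -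
    (∫ x, f x ∂(ComplexMeasure.re μ).toJordanDecomposition.negPart)) +
  Complex.I * ((∫ x, f x ∂(ComplexMeasure.im μ).toJordanDecomposition.posPart) -
    (∫ x, f x ∂(ComplexMeasure.im μ).toJordanDecomposition.negPart))

/-- The convolution `(φ ∗ μ)(x) = ∫ φ(x - y) dμ(y)`. -/
def mconv {d : ℕ} (μ : ComplexMeasure (Euc d)) (φ : Euc d → ℂ) (x : Euc d) : ℂ :=
  cInt μ (fun y => φ (x - y))

/-- The total variation norm `|μ|(ℝ^d)` of a finite complex Borel measure, as the
supremum of `∑ ‖μ(S_i)‖` over finite disjoint families of measurable sets. -/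
def cmNorm {d : ℕ} (μ : ComplexMeasure (Euc d)) : ℝ≥0∞ :=
  ⨆ (n : ℕ) (S : Fin n → Set (Euc d)) (_ : ∀ i, MeasurableSet (S i))
    (_ : Pairwise (Function.onFun Disjoint S)), ∑ i, (‖μ (S i)‖₊ : ℝ≥0∞)

/-- norm of a vector of complex measures. -/
def cmNormVec {d t : ℕ} (μ : Fin t → ComplexMeasure (Euc d)) : ℝ≥0∞ :=
  ∑ l, cmNorm (μ l)

/-- The Riesz condition with explicit constants. -/
def RieszWith {d r : ℕ} (p : ℝ≥0∞) (Φ : Fin r → Euc d → ℂ) (m M : ℝ) : Prop :=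
  0 < m ∧ m ≤ M ∧ ∀ C : Fin r → (Fin d → ℤ) → ℂ, vlpNorm p C < ∞ →
    ENNReal.ofReal m * vlpNorm p C ≤ eLpNorm (genFun Φ C) p volume ∧
    eLpNorm (genFun Φ C) p volume ≤ ENNReal.ofReal M * vlpNorm p C

/-- The Riesz (unconditional basis) condition for `p`. -/
def RieszCond {d r : ℕ} (p : ℝ≥0∞) (Φ : Fin r → Euc d → ℂ) : Prop :=
  ∃ m M : ℝ, RieszWith p Φ m M

/-- `X` is a `μ⃗`-sampling set for `V^p(Φ)`. -/
def SamplingSet {d r t : ℕ} {J : Type*} (p : ℝ≥0∞) (Φ : Fin r → Euc d → ℂ)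
    (μ : Fin t → ComplexMeasure (Euc d)) (X : J → Euc d) : Prop :=
  ∃ A B : ℝ, 0 < A ∧ A ≤ B ∧ ∀ C : Fin r → (Fin d → ℤ) → ℂ, vlpNorm p C < ∞ →
    ENNReal.ofReal A * eLpNorm (genFun Φ C) p volume ≤
      ∑ l, lpNorm p (fun j => mconv (μ l) (genFun Φ C) (X j)) ∧
    ∑ l, lpNorm p (fun j => mconv (μ l) (genFun Φ C) (X j)) ≤
      ENNReal.ofReal B * eLpNorm (genFun Φ C) p volume

/-- `X` is separated with constant `δ`. -/
def SeparatedWith {d : ℕ} {J : Type*} (X : J → Euc d) (δ : ℝ) : Prop :=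
  ∀ i j : J, i ≠ j → δ ≤ dist (X i) (X j)

def SeparatedSet {d : ℕ} {J : Type*} (X : J → Euc d) : Prop :=
  ∃ δ : ℝ, 0 < δ ∧ SeparatedWith X δ

/-- Membership in `M_s(ℝ^d)`: `∫ (1+|x|)^s d|μ| < ∞`, expressed via the Jordan
decompositions of the real and imaginary parts. -/
def MemMs {d : ℕ} (s : ℝ) (μ : ComplexMeasure (Euc d)) : Prop :=
  (∫⁻ x, ENNReal.ofReal ((1 + ‖x‖) ^ s) ∂(ComplexMeasure.re μ).toJordanDecomposition.posPart < ∞) ∧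
  (∫⁻ x, ENNReal.ofReal ((1 + ‖x‖) ^ s) ∂(ComplexMeasure.re μ).toJordanDecomposition.negPart < ∞) ∧
  (∫⁻ x, ENNReal.ofReal ((1 + ‖x‖) ^ s) ∂(ComplexMeasure.im μ).toJordanDecomposition.posPart < ∞) ∧
  (∫⁻ x, ENNReal.ofReal ((1 + ‖x‖) ^ s) ∂(ComplexMeasure.im μ).toJordanDecomposition.negPart < ∞)

/-- `Φ ∈ W_s`: an `s`-localized Riesz generator. -/
def MemWs {d r : ℕ} (s : ℝ) (Φ : Fin r → Euc d → ℂ) : Prop :=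
  (∀ i, MemW01 (Φ i)) ∧ RieszCond 2 Φ ∧
    ∀ i, ∃ C0 : ℝ, 0 < C0 ∧ ∀ x : Euc d, ‖Φ i x‖ ≤ C0 * (1 + ‖x‖) ^ (-s)

end


section AuxGenFun
open MeasureTheory ENNReal

variable {κ : Type*} [MeasurableSpace κ] [MeasurableSingletonClass κ] [Countable κ]

theorem aux_lpN_add_le (pt : ℝ) (hpt : 1 ≤ pt) (u v : κ → ℝ≥0∞) :
    (∑' n, (u n + v n) ^ pt) ^ (1/pt) ≤ (∑' n, u n ^ pt) ^ (1/pt) + (∑' n, v n ^ pt) ^ (1/pt) := by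
  have := lintegral_Lp_add_le (μ := (Measure.count : Measure κ))
    (measurable_of_countable u).aemeasurable (measurable_of_countable v).aemeasurable hpt
  simpa [lintegral_count] using this

theorem aux_lpN_sum_le {ι : Type*} (s : Finset ι) (u : ι → κ → ℝ≥0∞) (pt : ℝ) (hpt : 1 ≤ pt) :
    (∑' n, (∑ m ∈ s, u m n) ^ pt) ^ (1/pt) ≤ ∑ m ∈ s, (∑' n, (u m n) ^ pt) ^ (1/pt) := by
  have h0 : 0 < pt := zero_lt_one.trans_le hpt
  induction s using Finset.cons_induction with
  | empty => simp [ENNReal.zero_rpow_of_pos h0,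
      ENNReal.zero_rpow_of_pos (show (0:ℝ) < 1/pt by positivity), h0]
  | cons a s ha ih =>
      simp only [Finset.sum_cons]
      refine le_trans (aux_lpN_add_le pt hpt _ _) ?_
      exact add_le_add le_rfl ih

theorem aux_lpN_tsum_le {ι : Type*} [Countable ι] (u : ι → κ → ℝ≥0∞) (pt : ℝ) (hpt : 1 ≤ pt) :
    (∑' n, (∑' m, u m n) ^ pt) ^ (1/pt) ≤ ∑' m, (∑' n, (u m n) ^ pt) ^ (1/pt) := by
  have h0 : 0 < pt := zero_lt_one.trans_le hpt
  set R := ∑' m, (∑' n, (u m n) ^ pt) ^ (1/pt) with hR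
  have key : (∑' n, (∑' m, u m n) ^ pt) ≤ R ^ pt := by
    have e2 : ∀ n, (∑' m, u m n) ^ pt = ⨆ s : Finset ι, (∑ m ∈ s, u m n) ^ pt := by
      intro n
      rw [ENNReal.tsum_eq_iSup_sum]
      exact OrderIso.map_iSup (ENNReal.orderIsoRpow pt h0) _
    simp_rw [e2]
    have hmono : Monotone (fun s : Finset ι => fun n => (∑ m ∈ s, u m n) ^ pt) := by
      intro s t hst
      exact fun n => ENNReal.rpow_le_rpow (Finset.sum_le_sum_of_subset hst) h0.le
    calc ∑' n, ⨆ s : Finset ι, (∑ m ∈ s, u m n) ^ pt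
        = ⨆ s : Finset ι, ∑' n, (∑ m ∈ s, u m n) ^ pt := by
          simp_rw [← lintegral_count]
          exact lintegral_iSup_directed (fun s => (measurable_of_countable _).aemeasurable)
            hmono.directed_le
      _ ≤ R ^ pt := by
          refine iSup_le fun s => ?_
          have h1 : ((∑' n, (∑ m ∈ s, u m n) ^ pt) ^ (1/pt)) ^ pt ≤ R ^ pt := by
            refine ENNReal.rpow_le_rpow ?_ h0.le
            refine le_trans (aux_lpN_sum_le s u pt hpt) ?_
            exact Summable.sum_le_tsum s (fun _ _ => zero_le) ENNReal.summable
          rwa [← ENNReal.rpow_mul, one_div_mul_cancel h0.ne', ENNReal.rpow_one] at h1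
  calc (∑' n, (∑' m, u m n) ^ pt) ^ (1/pt) ≤ (R ^ pt) ^ (1/pt) :=
        ENNReal.rpow_le_rpow key (by positivity)
    _ = R := by rw [← ENNReal.rpow_mul, mul_one_div_cancel h0.ne', ENNReal.rpow_one]

theorem aux_enn_nnnorm_tsum_le {ι : Type*} (g : ι → ℂ) :
    (‖∑' k, g k‖₊ : ℝ≥0∞) ≤ ∑' k, (‖g k‖₊ : ℝ≥0∞) := by
  by_cases h : (∑' k, (‖g k‖₊ : ℝ≥0∞)) = ∞
  · simp [h]
  · have hs : Summable (fun k => ‖g k‖₊) := ENNReal.tsum_coe_ne_top_iff_summable.1 h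
    rw [← ENNReal.coe_tsum hs]
    exact ENNReal.coe_le_coe.2 (nnnorm_tsum_le hs)

theorem aux_conv_lp_le [AddCommGroup κ] (G A : κ → ℝ≥0∞) (pt : ℝ) (hpt : 1 ≤ pt) :
    (∑' n, (∑' k, G k * A (n - k)) ^ pt) ^ (1/pt) ≤
      (∑' k, A k) * (∑' n, G n ^ pt) ^ (1/pt) := by
  have h0 : 0 < pt := zero_lt_one.trans_le hpt
  have hflip : ∀ n : κ, (∑' k, G k * A (n - k)) = ∑' m, A m * G (n - m) := by
    intro n
    calc (∑' k, G k * A (n - k))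
        = ∑' k, (fun m => A m * G (n - m)) ((Equiv.subLeft n) k) := by
          refine tsum_congr fun k => ?_
          simp [Equiv.subLeft, sub_sub_cancel, mul_comm]
      _ = ∑' m, A m * G (n - m) := Equiv.tsum_eq (Equiv.subLeft n) (fun m => A m * G (n - m))
  simp_rw [hflip]
  refine le_trans (aux_lpN_tsum_le (fun m n => A m * G (n - m)) pt hpt) ?_
  have hterm : ∀ m : κ, (∑' n, (A m * G (n - m)) ^ pt) ^ (1/pt)
      = A m * (∑' n, G n ^ pt) ^ (1/pt) := by
    intro m
    have h1 : ∀ n : κ, (A m * G (n - m)) ^ pt = A m ^ pt * G (n - m) ^ pt := fun n =>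
      ENNReal.mul_rpow_of_nonneg _ _ h0.le
    simp_rw [h1, ENNReal.tsum_mul_left]
    rw [ENNReal.mul_rpow_of_nonneg _ _ (show (0:ℝ) ≤ 1/pt by positivity),
      ← ENNReal.rpow_mul, mul_one_div_cancel h0.ne', ENNReal.rpow_one]
    congr 1
    exact congrArg (· ^ (1/pt)) (Equiv.tsum_eq (Equiv.subRight m) (fun n => G n ^ pt))
  simp_rw [hterm]
  rw [ENNReal.tsum_mul_right]

theorem aux_cube_ae {d r : ℕ} (Φ : Fin r → Euc d → ℂ) (n : Fin d → ℤ) :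
    ∀ᵐ y ∂(volume.restrict {x : Euc d | ∀ i, x i ∈ Set.Icc (0:ℝ) 1}),
      ∀ (k : Fin d → ℤ) (i : Fin r),
        (‖Φ i (y + zemb n - zemb k)‖₊ : ℝ≥0∞) ≤ cubeSup (Φ i) (n - k) := by
  rw [ae_all_iff]
  intro k
  rw [ae_all_iff]
  intro i
  filter_upwards [ENNReal.ae_le_essSup
    (μ := volume.restrict {x : Euc d | ∀ i, x i ∈ Set.Icc (0:ℝ) 1})
    (fun y => (‖Φ i (y + zemb (n - k))‖₊ : ℝ≥0∞))] with y hy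
  have hz : zemb (n - k) = zemb n - zemb k := by ext j; simp [zemb]
  rw [← add_sub, ← hz]
  exact hy

theorem aux_cube_measurable {d : ℕ} :
    MeasurableSet {x : Euc d | ∀ i, x i ∈ Set.Icc (0:ℝ) 1} := by
  have : {x : Euc d | ∀ i, x i ∈ Set.Icc (0:ℝ) 1}
      = ⋂ i, (fun x : Euc d => x i) ⁻¹' Set.Icc 0 1 := by ext; simp
  rw [this]
  exact MeasurableSet.iInter fun i =>
    (EuclideanSpace.proj i).continuous.measurable measurableSet_Icc

end AuxGenFun

open MeasureTheory ENNReal in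
/-- inequality (4.2.4): for measurable generators with finite `W¹` norm
and `ℓ^p` coefficients, the generating series converges absolutely a.e. and
`‖f‖_{W^p} ≤ ‖C‖_{(ℓ^p)^{(r)}} ‖Φ‖_{(W¹)^{(r)}}`. -/
theorem genFun_Wp_bound
    (d r : ℕ) (p : ℝ≥0∞) (hp : 1 ≤ p)
    (Φ : Fin r → Euc d → ℂ) (hΦm : ∀ i, Measurable (Φ i)) (hΦ : ∀ i, WNorm 1 (Φ i) < ∞)
    (C : Fin r → (Fin d → ℤ) → ℂ) (hC : vlpNorm p C < ∞) :
    (∀ᵐ x ∂(volume : Measure (Euc d)),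
        Summable (fun q : (Fin d → ℤ) × Fin r => ‖C q.2 q.1 * Φ q.2 (x - zemb q.1)‖)) ∧
      WNorm p (genFun Φ C) ≤ vlpNorm p C * WNormVec Φ := by
  classical
  have hW1 : ∀ i, WNorm 1 (Φ i) = ∑' k, cubeSup (Φ i) k := by
    intro i; simp [WNorm]
  have hGle : ∀ i k, (‖C i k‖₊ : ℝ≥0∞) ≤ lpNorm p (C i) := by
    intro i k
    by_cases hp' : p = ∞
    · rw [_root_.lpNorm, if_pos hp']
      exact le_iSup (fun j => (‖C i j‖₊ : ℝ≥0∞)) k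
    · rw [_root_.lpNorm, if_neg hp']
      have hpt1 : 1 ≤ p.toReal := by
        have := ENNReal.toReal_mono hp' hp
        simpa using this
      have h0 : 0 < p.toReal := zero_lt_one.trans_le hpt1
      have h1 : (‖C i k‖₊ : ℝ≥0∞) = (((‖C i k‖₊ : ℝ≥0∞)) ^ p.toReal) ^ (1/p.toReal) := by
        rw [← ENNReal.rpow_mul, mul_one_div_cancel h0.ne', ENNReal.rpow_one]
      rw [h1]
      exact ENNReal.rpow_le_rpow (ENNReal.le_tsum k) (by positivity)
  have hlpC : ∀ i, lpNorm p (C i) < ∞ := by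
    intro i
    refine lt_of_le_of_lt ?_ hC
    exact Finset.single_le_sum (f := fun i => lpNorm p (C i)) (fun _ _ => zero_le)
      (Finset.mem_univ i)
  have hAfin : ∀ i, (∑' k, cubeSup (Φ i) k) < ∞ := fun i => (hW1 i) ▸ hΦ i
  have hHle : ∀ (i : Fin r) (n : Fin d → ℤ),
      (∑' k, (‖C i k‖₊ : ℝ≥0∞) * cubeSup (Φ i) (n - k))
        ≤ lpNorm p (C i) * ∑' k, cubeSup (Φ i) k := by
    intro i n
    calc (∑' k, (‖C i k‖₊ : ℝ≥0∞) * cubeSup (Φ i) (n - k))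
        ≤ ∑' k, lpNorm p (C i) * cubeSup (Φ i) (n - k) :=
          ENNReal.tsum_le_tsum fun k => mul_le_mul_left (hGle i k) _
      _ = lpNorm p (C i) * ∑' k, cubeSup (Φ i) (n - k) := ENNReal.tsum_mul_left
      _ = lpNorm p (C i) * ∑' k, cubeSup (Φ i) k := by
          congr 1
          exact Equiv.tsum_eq (Equiv.subLeft n) (cubeSup (Φ i))
  have hHfin : ∀ (i : Fin r) (n : Fin d → ℤ),
      (∑' k, (‖C i k‖₊ : ℝ≥0∞) * cubeSup (Φ i) (n - k)) < ∞ := by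
    intro i n
    refine lt_of_le_of_lt (hHle i n) ?_
    exact ENNReal.mul_lt_top (hlpC i) (hAfin i)
  have hFfin : ∀ n : Fin d → ℤ,
      (∑ i, ∑' k, (‖C i k‖₊ : ℝ≥0∞) * cubeSup (Φ i) (n - k)) < ∞ := by
    intro n
    exact ENNReal.sum_lt_top.mpr fun i _ => hHfin i n
  -- pointwise summability criterion
  have hprod : ∀ (x : Euc d) (n : Fin d → ℤ),
      (∀ (k : Fin d → ℤ) (i : Fin r),
          (‖Φ i (x - zemb k)‖₊ : ℝ≥0∞) ≤ cubeSup (Φ i) (n - k)) →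
      Summable (fun q : (Fin d → ℤ) × Fin r => ‖C q.2 q.1 * Φ q.2 (x - zemb q.1)‖) := by
    intro x n hx
    have hbound : (∑' q : (Fin d → ℤ) × Fin r, (‖C q.2 q.1 * Φ q.2 (x - zemb q.1)‖₊ : ℝ≥0∞)) ≠ ∞ := by
      have h1 : (∑' q : (Fin d → ℤ) × Fin r, (‖C q.2 q.1 * Φ q.2 (x - zemb q.1)‖₊ : ℝ≥0∞))
          ≤ ∑' q : (Fin d → ℤ) × Fin r, (‖C q.2 q.1‖₊ : ℝ≥0∞) * cubeSup (Φ q.2) (n - q.1) := by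
        refine ENNReal.tsum_le_tsum fun q => ?_
        rw [nnnorm_mul, ENNReal.coe_mul]
        exact mul_le_mul_right (hx q.1 q.2) _
      have h2 : (∑' q : (Fin d → ℤ) × Fin r, (‖C q.2 q.1‖₊ : ℝ≥0∞) * cubeSup (Φ q.2) (n - q.1))
          = ∑ i, ∑' k, (‖C i k‖₊ : ℝ≥0∞) * cubeSup (Φ i) (n - k) := by
        rw [ENNReal.tsum_prod (f := fun (k : Fin d → ℤ) (i : Fin r) =>
          (‖C i k‖₊ : ℝ≥0∞) * cubeSup (Φ i) (n - k))]
        rw [ENNReal.tsum_comm]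
        exact tsum_fintype _
      exact (lt_of_le_of_lt (h1.trans_eq h2) (hFfin n)).ne
    have hs : Summable (fun q : (Fin d → ℤ) × Fin r => ‖C q.2 q.1 * Φ q.2 (x - zemb q.1)‖₊) :=
      ENNReal.tsum_coe_ne_top_iff_summable.1 hbound
    simpa using NNReal.summable_coe.2 hs
  -- a.e. over each translated cube
  have haen : ∀ n : Fin d → ℤ,
      ∀ᵐ y ∂(volume.restrict {x : Euc d | ∀ i, x i ∈ Set.Icc (0:ℝ) 1}),
        Summable (fun q : (Fin d → ℤ) × Fin r =>
          ‖C q.2 q.1 * Φ q.2 (y + zemb n - zemb q.1)‖) := by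
    intro n
    filter_upwards [aux_cube_ae Φ n] with y hy
    exact hprod (y + zemb n) n hy
  constructor
  · -- part 1: a.e. summability
    rw [Filter.Eventually]
    have hTn : ∀ n : Fin d → ℤ,
        volume ((fun x : Euc d => x - zemb n) ⁻¹'
          {y : Euc d | (∀ i, y i ∈ Set.Icc (0:ℝ) 1) ∧
            ¬ Summable (fun q : (Fin d → ℤ) × Fin r =>
              ‖C q.2 q.1 * Φ q.2 (y + zemb n - zemb q.1)‖)}) = 0 := by
      intro n
      have h2 := ae_iff.1 (haen n)
      rw [Measure.restrict_apply' aux_cube_measurable] at h2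
      have h3 : {y : Euc d | (∀ i, y i ∈ Set.Icc (0:ℝ) 1) ∧
            ¬ Summable (fun q : (Fin d → ℤ) × Fin r =>
              ‖C q.2 q.1 * Φ q.2 (y + zemb n - zemb q.1)‖)}
          = {y : Euc d | ¬ Summable (fun q : (Fin d → ℤ) × Fin r =>
              ‖C q.2 q.1 * Φ q.2 (y + zemb n - zemb q.1)‖)}
            ∩ {x : Euc d | ∀ i, x i ∈ Set.Icc (0:ℝ) 1} := by
        ext y; simp [Set.mem_inter_iff, and_comm]
      have h4 := measure_preimage_add_right (volume : Measure (Euc d)) (-(zemb n))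
        {y : Euc d | (∀ i, y i ∈ Set.Icc (0:ℝ) 1) ∧
            ¬ Summable (fun q : (Fin d → ℤ) × Fin r =>
              ‖C q.2 q.1 * Φ q.2 (y + zemb n - zemb q.1)‖)}
      simp only [← sub_eq_add_neg] at h4
      rw [h4, h3, h2]
    refine measure_mono_null ?_ (measure_iUnion_null hTn)
    intro x hx
    refine Set.mem_iUnion.2 ⟨fun j => ⌊x j⌋, ?_, ?_⟩
    · intro j
      show (x - zemb fun j => ⌊x j⌋) j ∈ Set.Icc (0:ℝ) 1
      have hxj : (x - zemb (fun j => ⌊x j⌋)) j = Int.fract (x j) := by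
        simp [zemb, Int.self_sub_floor]
      rw [hxj]
      exact ⟨Int.fract_nonneg _, (Int.fract_lt_one _).le⟩
    · show ¬ Summable (fun q : (Fin d → ℤ) × Fin r =>
        ‖C q.2 q.1 * Φ q.2 (x - zemb (fun j => ⌊x j⌋) + zemb (fun j => ⌊x j⌋) - zemb q.1)‖)
      rw [sub_add_cancel]
      exact hx
  · -- part 2: the norm bound
    have hpt1' : p ≠ ∞ → 1 ≤ p.toReal := by
      intro hp'
      have := ENNReal.toReal_mono hp' hp
      simpa using this
    have hcube : ∀ n : Fin d → ℤ, cubeSup (genFun Φ C) n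
        ≤ ∑ i, ∑' k, (‖C i k‖₊ : ℝ≥0∞) * cubeSup (Φ i) (n - k) := by
      intro n
      have hae2 : ∀ᵐ y ∂(volume.restrict {x : Euc d | ∀ i, x i ∈ Set.Icc (0:ℝ) 1}),
          (fun x => (‖genFun Φ C (x + zemb n)‖₊ : ℝ≥0∞)) y
            ≤ ∑ i, ∑' k, (‖C i k‖₊ : ℝ≥0∞) * cubeSup (Φ i) (n - k) := by
        filter_upwards [aux_cube_ae Φ n] with y hy
        calc (‖genFun Φ C (y + zemb n)‖₊ : ℝ≥0∞)
            ≤ ∑' k, (‖∑ i, C i k * Φ i (y + zemb n - zemb k)‖₊ : ℝ≥0∞) :=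
              aux_enn_nnnorm_tsum_le _
          _ ≤ ∑' k, ∑ i, (‖C i k‖₊ : ℝ≥0∞) * cubeSup (Φ i) (n - k) := by
              refine ENNReal.tsum_le_tsum fun k => ?_
              calc (‖∑ i, C i k * Φ i (y + zemb n - zemb k)‖₊ : ℝ≥0∞)
                  ≤ ∑ i, (‖C i k * Φ i (y + zemb n - zemb k)‖₊ : ℝ≥0∞) := by
                    rw [← ENNReal.coe_finset_sum]
                    exact ENNReal.coe_le_coe.2 (nnnorm_sum_le _ _)
                _ ≤ ∑ i, (‖C i k‖₊ : ℝ≥0∞) * cubeSup (Φ i) (n - k) := by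
                    refine Finset.sum_le_sum fun i _ => ?_
                    rw [nnnorm_mul, ENNReal.coe_mul]
                    exact mul_le_mul_right (hy k i) _
          _ = ∑ i, ∑' k, (‖C i k‖₊ : ℝ≥0∞) * cubeSup (Φ i) (n - k) :=
              Summable.tsum_finsetSum fun i _ => ENNReal.summable
      exact essSup_le_of_ae_le _ hae2
    have hS : (∑ i, lpNorm p (C i) * ∑' k, cubeSup (Φ i) k)
        ≤ vlpNorm p C * WNormVec Φ := by
      have hWv : WNormVec Φ = ∑ i, ∑' k, cubeSup (Φ i) k := by
        unfold WNormVec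
        exact Finset.sum_congr rfl fun i _ => hW1 i
      calc ∑ i, lpNorm p (C i) * ∑' k, cubeSup (Φ i) k
          ≤ ∑ i, vlpNorm p C * ∑' k, cubeSup (Φ i) k := by
            refine Finset.sum_le_sum fun i _ => ?_
            refine mul_le_mul_left ?_ _
            exact Finset.single_le_sum (f := fun i => lpNorm p (C i)) (fun _ _ => zero_le)
              (Finset.mem_univ i)
        _ = vlpNorm p C * ∑ i, ∑' k, cubeSup (Φ i) k := by rw [Finset.mul_sum]
        _ = vlpNorm p C * WNormVec Φ := by rw [hWv]
    by_cases hp' : p = ∞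
    · subst hp'
      rw [WNorm, if_pos rfl]
      refine iSup_le fun n => ?_
      refine le_trans (hcube n) ?_
      exact le_trans (Finset.sum_le_sum fun i _ => hHle i n) hS
    · have hpt1 : 1 ≤ p.toReal := hpt1' hp'
      have h0 : 0 < p.toReal := zero_lt_one.trans_le hpt1
      rw [WNorm, if_neg hp']
      have hlp_eq : ∀ i, lpNorm p (C i)
          = (∑' n : Fin d → ℤ, (‖C i n‖₊ : ℝ≥0∞) ^ p.toReal) ^ (1/p.toReal) := by
        intro i; rw [_root_.lpNorm, if_neg hp']
      calc (∑' n : Fin d → ℤ, cubeSup (genFun Φ C) n ^ p.toReal) ^ (1/p.toReal)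
          ≤ (∑' n : Fin d → ℤ,
              (∑ i, ∑' k, (‖C i k‖₊ : ℝ≥0∞) * cubeSup (Φ i) (n - k)) ^ p.toReal) ^ (1/p.toReal) :=
            ENNReal.rpow_le_rpow
              (ENNReal.tsum_le_tsum fun n => ENNReal.rpow_le_rpow (hcube n) h0.le)
              (by positivity)
        _ ≤ ∑ i, (∑' n : Fin d → ℤ,
              (∑' k, (‖C i k‖₊ : ℝ≥0∞) * cubeSup (Φ i) (n - k)) ^ p.toReal) ^ (1/p.toReal) :=
            aux_lpN_sum_le Finset.univ _ p.toReal hpt1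
        _ ≤ ∑ i, (∑' k, cubeSup (Φ i) k)
              * (∑' n : Fin d → ℤ, (‖C i n‖₊ : ℝ≥0∞) ^ p.toReal) ^ (1/p.toReal) :=
            Finset.sum_le_sum fun i _ =>
              aux_conv_lp_le (fun k => (‖C i k‖₊ : ℝ≥0∞)) (cubeSup (Φ i)) p.toReal hpt1
        _ = ∑ i, lpNorm p (C i) * ∑' k, cubeSup (Φ i) k := by
            refine Finset.sum_congr rfl fun i _ => ?_
            rw [hlp_eq i, mul_comm]
        _ ≤ vlpNorm p C * WNormVec Φ := hS
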